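/- (One-iteration inequality for Bregman PD3O.) Suppose h : ℝⁿ → ℝ is convex differentiable with L-Lipschitz gradient in the Euclidean norm, στ‖A‖² ≤ 1, τ ≤ 1/L, d_p(x,x') ≥ (1/2)‖x−x'‖² (Euclidean) and d_d(z,z') ≥ (1/2)‖z−z'‖_d². Suppose x⁰ ∈ interior(dom φ_p), z⁰ ∈ interior(dom φ_d), and x¹, z¹ satisfy: (i) τ(f(x¹) − f(x)) ≤ d_p(x,x⁰) − d_p(x¹,x⁰) − d_p(x,x¹) + τ⟨Aᵀz⁰ + ∇h(x⁰), x − x¹⟩ for all x ∈ dom f ∩ dom φ_p, and (ii) σ(g*(z¹) − g*(z)) ≤ d_d(z,z⁰) − d_d(z¹,z⁰) − d_d(z,z¹) − σ⟨z − z¹, A(2x¹ − x⁰ + τ(∇h(x⁰) − ∇h(x¹)))⟩ for all z ∈ dom g* ∩ dom φ_d. Then for all such x and z: 𝓛(x¹, z) − 𝓛(x, z¹) ≤ d_pd3o(x, ∇h(x), z; x⁰, ∇h(x⁰), z⁰) − d_pd3o(x, ∇h(x), z; x¹, ∇h(x¹), z¹) − d_pd3o(x¹, ∇h(x), z¹;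 x⁰, ∇h(x⁰), z⁰). -/

import Mathlib

open scoped RealInnerProductSpace

/-- Bregman distance generated by kernel `φ` with gradient map `g`. -/
noncomputable def breg {V : Type*} [NormedAddCommGroup V] [InnerProductSpace ℝ V]
    (φ : V → ℝ) (g : V → V) (x x' : V) : ℝ :=
  φ x - φ x' - ⟪g x', x - x'⟫

/-- The PD3O primal–dual distance. -/
noncomputable def dpd3o {V W : Type*} [NormedAddCommGroup V] [InnerProductSpace ℝ V]
    [NormedAddCommGroup W] [InnerProductSpace ℝ W]
    (τ σ : ℝ) (φp : V → ℝ) (gp : V → V) (φd : W → ℝ) (gd : W → W)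
    (A : V →L[ℝ] W) (x y : V) (z : W) (x' y' : V) (z' : W) : ℝ :=
  (1/τ) * breg φp gp x x' + (1/σ) * breg φd gd z z' + (τ/2) * ‖y - y'‖^2
    - ⟪y - y', x - x'⟫ - ⟪z - z', A (x - x')⟫ + τ * ⟪z - z', A (y - y')⟫


variable {E : Type*} [NormedAddCommGroup E] [InnerProductSpace ℝ E] [CompleteSpace E]

lemma line_hasDerivAt (h : E → ℝ) (gh : E → E) (hhgrad : ∀ x, HasGradientAt h (gh x) x)
    (a v : E) (t : ℝ) :
    HasDerivAt (fun s : ℝ => h (a + s • v)) ⟪gh (a + t • v), v⟫ t := by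
  have hline : HasDerivAt (fun s : ℝ => a + s • v) v t := by
    simpa using ((hasDerivAt_id t).smul_const v).const_add a
  have := (hasGradientAt_iff_hasFDerivAt.mp (hhgrad (a + t • v))).comp_hasDerivAt t hline
  simpa [InnerProductSpace.toDual_apply_apply, Function.comp_def] using this

lemma grad_lower (h : E → ℝ) (gh : E → E) (hhconv : ConvexOn ℝ Set.univ h)
    (hhgrad : ∀ x, HasGradientAt h (gh x) x) (a b : E) :
    h a + ⟪gh a, b - a⟫ ≤ h b := by
  set v := b - a with hv
  have hg : HasDerivAt (fun s : ℝ => h (a + s • v)) ⟪gh a, v⟫ 0 := by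
    simpa using line_hasDerivAt h gh hhgrad a v 0
  have hgw : HasDerivWithinAt (fun s : ℝ => h (a + s • v)) ⟪gh a, v⟫ (Set.Ioi 0) 0 :=
    hg.hasDerivWithinAt
  rw [hasDerivWithinAt_iff_tendsto_slope] at hgw
  have hs : Set.Ioi (0:ℝ) \ {0} = Set.Ioi 0 := by
    ext t; simp +contextual [ne_of_gt]
  rw [hs] at hgw
  have hev : ∀ᶠ t in nhdsWithin 0 (Set.Ioi (0:ℝ)),
      slope (fun s : ℝ => h (a + s • v)) 0 t ≤ h b - h a := by
    filter_upwards [Ioc_mem_nhdsGT_of_mem (by norm_num : (0:ℝ) ∈ Set.Ico (0:ℝ) 1)] with t ht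
    have ht0 : 0 < t := ht.1
    have ht1 : t ≤ 1 := ht.2
    have hc := hhconv.2 (Set.mem_univ a) (Set.mem_univ b)
      (by linarith : (0:ℝ) ≤ 1 - t) (le_of_lt ht0) (by ring)
    have heq : (1 - t) • a + t • b = a + t • v := by
      rw [hv]; module
    rw [heq] at hc
    simp only [smul_eq_mul] at hc
    rw [slope_def_field]
    simp only [zero_smul, add_zero, sub_zero]
    rw [div_le_iff₀ ht0]
    nlinarith [hc]
  have hne : (nhdsWithin (0:ℝ) (Set.Ioi 0)).NeBot := by infer_instance
  have := le_of_tendsto hgw hev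
  linarith [this]

lemma descent_lemma (h : E → ℝ) (gh : E → E) (hhgrad : ∀ x, HasGradientAt h (gh x) x)
    (L : ℝ) (hL : 0 < L) (hlip : ∀ x y, ‖gh x - gh y‖ ≤ L * ‖x - y‖) (a b : E) :
    h b ≤ h a + ⟪gh a, b - a⟫ + L / 2 * ‖b - a‖ ^ 2 := by
  set v := b - a with hv
  have hghc : Continuous gh := by
    have : LipschitzWith (Real.toNNReal L) gh := by
      apply LipschitzWith.of_dist_le_mul
      intro x y
      simpa [dist_eq_norm, Real.coe_toNNReal _ hL.le] using hlip x y
    exact this.continuous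
  have hcont : Continuous fun t : ℝ => ⟪gh (a + t • v), v⟫ :=
    Continuous.inner (hghc.comp (continuous_const.add (continuous_id.smul continuous_const)))
      continuous_const
  have hcont2 : Continuous fun t : ℝ => ⟪gh a, v⟫ + L * ‖v‖ ^ 2 * t :=
    continuous_const.add (continuous_const.mul continuous_id)
  have hint := intervalIntegral.integral_eq_sub_of_hasDerivAt
    (f := fun s : ℝ => h (a + s • v)) (f' := fun t : ℝ => ⟪gh (a + t • v), v⟫)
    (a := 0) (b := 1)
    (fun t _ => line_hasDerivAt h gh hhgrad a v t) (hcont.intervalIntegrable 0 1)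
  have hbound : ∫ t in (0:ℝ)..1, ⟪gh (a + t • v), v⟫ ≤
      ∫ t in (0:ℝ)..1, (⟪gh a, v⟫ + L * ‖v‖ ^ 2 * t) := by
    apply intervalIntegral.integral_mono_on (by norm_num)
      (hcont.intervalIntegrable 0 1) (hcont2.intervalIntegrable 0 1)
    intro t ht
    have h1 : ⟪gh (a + t • v) - gh a, v⟫ ≤ L * ‖v‖ ^ 2 * t := by
      calc ⟪gh (a + t • v) - gh a, v⟫ ≤ ‖gh (a + t • v) - gh a‖ * ‖v‖ :=
            real_inner_le_norm _ _
        _ ≤ (L * ‖a + t • v - a‖) * ‖v‖ := by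
            gcongr; exact hlip _ _
        _ = L * ‖v‖ ^ 2 * t := by
            simp [norm_smul, abs_of_nonneg ht.1]; ring
    have h2 : ⟪gh (a + t • v), v⟫ = ⟪gh a, v⟫ + ⟪gh (a + t • v) - gh a, v⟫ := by
      rw [inner_sub_left]; ring
    linarith
  have hval : ∫ t in (0:ℝ)..1, (⟪gh a, v⟫ + L * ‖v‖ ^ 2 * t) = ⟪gh a, v⟫ + L / 2 * ‖v‖ ^ 2 := by
    rw [intervalIntegral.integral_add intervalIntegrable_const
      ((by fun_prop : Continuous fun t : ℝ => L * ‖v‖ ^ 2 * t).intervalIntegrable 0 1)]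
    rw [intervalIntegral.integral_const_mul, integral_id]
    norm_num
    ring
  simp only [one_smul, zero_smul, add_zero] at hint
  have hab : a + v = b := by rw [hv]; abel
  rw [hab] at hint
  linarith

lemma coco_lemma (h : E → ℝ) (gh : E → E) (hhconv : ConvexOn ℝ Set.univ h)
    (hhgrad : ∀ x, HasGradientAt h (gh x) x)
    (L : ℝ) (hL : 0 < L) (hlip : ∀ x y, ‖gh x - gh y‖ ≤ L * ‖x - y‖) (a b : E) :
    1 / (2 * L) * ‖gh a - gh b‖ ^ 2 ≤ h a - h b - ⟪gh b, a - b⟫ := by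
  set w := a - (1 / L) • (gh a - gh b) with hw
  have h1 : h b + ⟪gh b, w - b⟫ ≤ h w := grad_lower h gh hhconv hhgrad b w
  have h2 : h w ≤ h a + ⟪gh a, w - a⟫ + L / 2 * ‖w - a‖ ^ 2 :=
    descent_lemma h gh hhgrad L hL hlip a w
  have hwa : w - a = -((1 / L) • (gh a - gh b)) := by rw [hw]; abel
  have e1 : ⟪gh a, w - a⟫ = -(1 / L) * ⟪gh a, gh a - gh b⟫ := by
    rw [hwa, inner_neg_right, real_inner_smul_right]; ring
  have e2 : ‖w - a‖ ^ 2 = (1 / L) ^ 2 * ‖gh a - gh b‖ ^ 2 := by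
    rw [hwa, norm_neg, norm_smul]
    rw [Real.norm_eq_abs, abs_of_pos (by positivity : (0:ℝ) < 1 / L)]
    ring
  have e3 : ⟪gh b, w - b⟫ = ⟪gh b, a - b⟫ - (1 / L) * ⟪gh b, gh a - gh b⟫ := by
    rw [hw, show a - (1 / L) • (gh a - gh b) - b = (a - b) - (1 / L) • (gh a - gh b) by abel,
      inner_sub_right, real_inner_smul_right]
  have e4 : (1/L) * ⟪gh a, gh a - gh b⟫ - (1/L) * ⟪gh b, gh a - gh b⟫
      = (1/L) * ‖gh a - gh b‖ ^ 2 := by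
    rw [← mul_sub, ← inner_sub_left, real_inner_self_eq_norm_sq]
  rw [e1, e2] at h2
  rw [e3] at h1
  have hfield : L / 2 * ((1 / L) ^ 2 * ‖gh a - gh b‖ ^ 2) = 1 / (2 * L) * ‖gh a - gh b‖ ^ 2 := by
    field_simp
  rw [hfield] at h2
  have e5 : 1 / L * ‖gh a - gh b‖ ^ 2 = 2 * (1 / (2 * L) * ‖gh a - gh b‖ ^ 2) := by
    field_simp
  linarith [h1, h2, e4, e5]

theorem stmt14 {n m : ℕ}
    (f : EuclideanSpace ℝ (Fin n) → ℝ) (domf : Set (EuclideanSpace ℝ (Fin n)))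
    (hf : ConvexOn ℝ domf f)
    (gs : EuclideanSpace ℝ (Fin m) → ℝ) (domgs : Set (EuclideanSpace ℝ (Fin m)))
    (hgs : ConvexOn ℝ domgs gs)
    (h : EuclideanSpace ℝ (Fin n) → ℝ)
    (gh : EuclideanSpace ℝ (Fin n) → EuclideanSpace ℝ (Fin n))
    (hhconv : ConvexOn ℝ Set.univ h)
    (hhgrad : ∀ x, HasGradientAt h (gh x) x)
    (L : ℝ) (hL : 0 < L)
    (hlip : ∀ x y, ‖gh x - gh y‖ ≤ L * ‖x - y‖)
    (A : EuclideanSpace ℝ (Fin n) →L[ℝ] EuclideanSpace ℝ (Fin m))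
    (φp : EuclideanSpace ℝ (Fin n) → ℝ)
    (gp : EuclideanSpace ℝ (Fin n) → EuclideanSpace ℝ (Fin n))
    (domp : Set (EuclideanSpace ℝ (Fin n)))
    (hpconv : ConvexOn ℝ domp φp)
    (hgp : ∀ u ∈ interior domp, HasGradientAt φp (gp u) u)
    (φd : EuclideanSpace ℝ (Fin m) → ℝ)
    (gd : EuclideanSpace ℝ (Fin m) → EuclideanSpace ℝ (Fin m))
    (domd : Set (EuclideanSpace ℝ (Fin m)))
    (hdconv : ConvexOn ℝ domd φd)
    (hgd : ∀ u ∈ interior domd, HasGradientAt φd (gd u) u)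
    (nd : EuclideanSpace ℝ (Fin m) → ℝ) (hnd : ∀ v, 0 ≤ nd v)
    (nA : ℝ) (hnA : 0 ≤ nA)
    (hA : ∀ u v, |⟪v, A u⟫| ≤ nA * ‖u‖ * nd v)
    (hscp : ∀ x ∈ domp, ∀ x' ∈ interior domp,
      (1/2) * ‖x - x'‖^2 ≤ breg φp gp x x')
    (hscd : ∀ z ∈ domd, ∀ z' ∈ interior domd,
      (1/2) * (nd (z - z'))^2 ≤ breg φd gd z z')
    (σ τ : ℝ) (hσ : 0 < σ) (hτ : 0 < τ)
    (hstep : σ * τ * nA^2 ≤ 1) (hτL : τ ≤ 1/L)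
    (x0 x1 : EuclideanSpace ℝ (Fin n)) (z0 z1 : EuclideanSpace ℝ (Fin m))
    (hx0 : x0 ∈ interior domp) (hz0 : z0 ∈ interior domd)
    (hx1 : x1 ∈ interior domp) (hz1 : z1 ∈ interior domd)
    (hx1f : x1 ∈ domf) (hz1g : z1 ∈ domgs)
    -- (i) optimality of the primal Bregman prox step
    (hprimal : ∀ x ∈ domf ∩ domp,
      τ * (f x1 - f x) ≤
        breg φp gp x x0 - breg φp gp x1 x0 - breg φp gp x x1
          + τ * ⟪(ContinuousLinearMap.adjoint A) z0 + gh x0, x - x1⟫)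
    -- (ii) optimality of the dual Bregman prox step
    (hdual : ∀ z ∈ domgs ∩ domd,
      σ * (gs z1 - gs z) ≤
        breg φd gd z z0 - breg φd gd z1 z0 - breg φd gd z z1
          - σ * ⟪z - z1, A ((2:ℝ) • x1 - x0 + τ • (gh x0 - gh x1))⟫) :
    ∀ x ∈ domf ∩ domp, ∀ z ∈ domgs ∩ domd,
      (f x1 + h x1 + ⟪z, A x1⟫ - gs z) - (f x + h x + ⟪z1, A x⟫ - gs z1) ≤
        dpd3o τ σ φp gp φd gd A x (gh x) z x0 (gh x0) z0
          - dpd3o τ σ φp gp φd gd A x (gh x) z x1 (gh x1) z1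
          - dpd3o τ σ φp gp φd gd A x1 (gh x) z1 x0 (gh x0) z0 := by
  intro x hx z hz
  have hcoco0 := coco_lemma h gh hhconv hhgrad L hL hlip x x1
  have h2L : 1 / (2 * L) = (1 / L) / 2 := by field_simp
  have hτ2 : τ / 2 ≤ 1 / (2 * L) := by rw [h2L]; linarith
  have hτL2 : τ / 2 * ‖gh x - gh x1‖ ^ 2 ≤ 1 / (2 * L) * ‖gh x - gh x1‖ ^ 2 :=
    mul_le_mul_of_nonneg_right hτ2 (sq_nonneg _)
  have hcoco : h x1 - h x + ⟪gh x1, x - x1⟫ + τ / 2 * ‖gh x - gh x1‖ ^ 2 ≤ 0 := by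
    have : ⟪gh x1, x - x1⟫ = - ⟪gh x1, x1 - x⟫ := by rw [← inner_neg_right]; congr 1; abel
    rw [this]
    have := coco_lemma h gh hhconv hhgrad L hL hlip x x1
    linarith [hτL2]
  have hP2 : f x1 - f x ≤
      1/τ * (breg φp gp x x0 - breg φp gp x1 x0 - breg φp gp x x1)
        + ⟪(ContinuousLinearMap.adjoint A) z0 + gh x0, x - x1⟫ := by
    rw [← sub_le_iff_le_add, one_div_mul_eq_div, le_div_iff₀ hτ]
    linarith [hprimal x hx]
  have hD2 : gs z1 - gs z ≤
      1/σ * (breg φd gd z z0 - breg φd gd z1 z0 - breg φd gd z z1)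
        - ⟪z - z1, A ((2:ℝ) • x1 - x0 + τ • (gh x0 - gh x1))⟫ := by
    have h3 : gs z1 - gs z + ⟪z - z1, A ((2:ℝ) • x1 - x0 + τ • (gh x0 - gh x1))⟫ ≤
        1/σ * (breg φd gd z z0 - breg φd gd z1 z0 - breg φd gd z z1) := by
      rw [one_div_mul_eq_div, le_div_iff₀ hσ]
      linarith [hdual z hz]
    linarith [h3]
  simp only [dpd3o, breg, inner_sub_left, inner_sub_right, inner_add_left, inner_add_right,
    map_sub, map_add, map_smul, real_inner_smul_left, real_inner_smul_right,
    ContinuousLinearMap.adjoint_inner_left, norm_sub_sq_real] at hP2 hD2 hcoco ⊢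
  linarith [hP2, hD2, hcoco]
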